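/- The Poincaré series of the set p^R = {p^{2^n} : n ∈ ℕ} ⊆ ℤ_p satisfies (1 - T)·P(T) = 1 + ∑_{n=0}^∞ T^{2^n + 1}, where N_m = |{x mod p^m : x ∈ p^R}| and P(T) = ∑_{m≥0} N_m T^m. -/

import Mathlib

open scoped Classical

/-- The formal power series `1 + ∑_{n=0}^∞ T^(2^n + 1)` over ℤ. -/
noncomputable def Fseries : PowerSeries ℤ :=
  PowerSeries.mk fun m => if m = 0 then 1 else if ∃ n : ℕ, m = 2 ^ n + 1 then 1 else 0

/-- counting function -/
def cfun (m : ℕ) : ℕ := ((Finset.range m).filter fun n => 2 ^ n < m).card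

lemma lt_of_two_pow_lt {n m : ℕ} (h : 2 ^ n < m) : n < m :=
  lt_trans (Nat.lt_two_pow_self (n := n)) h

lemma cfun_eq_filter (m N : ℕ) (h : m ≤ N) :
    cfun m = ((Finset.range N).filter fun n => 2 ^ n < m).card := by
  unfold cfun
  congr 1
  ext n
  simp only [Finset.mem_filter, Finset.mem_range]
  constructor
  · rintro ⟨h1, h2⟩; exact ⟨lt_of_lt_of_le h1 h, h2⟩
  · rintro ⟨_, h2⟩; exact ⟨lt_of_two_pow_lt h2, h2⟩

lemma cfun_succ (m : ℕ) :
    (cfun (m + 1) : ℤ) = cfun m + (if ∃ n : ℕ, m = 2 ^ n then 1 else 0) := by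
  have h1 : cfun (m + 1) = ((Finset.range (m+1)).filter fun n => 2 ^ n < m + 1).card := rfl
  have h2 : cfun m = ((Finset.range (m+1)).filter fun n => 2 ^ n < m).card :=
    cfun_eq_filter m (m+1) (Nat.le_succ m)
  have hsplit : ((Finset.range (m+1)).filter fun n => 2 ^ n < m + 1)
      = ((Finset.range (m+1)).filter fun n => 2 ^ n < m)
        ∪ ((Finset.range (m+1)).filter fun n => 2 ^ n = m) := by
    rw [← Finset.filter_or]
    apply Finset.filter_congr
    intro n _
    simp only [Nat.lt_succ_iff, le_iff_lt_or_eq]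
  have hdisj : Disjoint ((Finset.range (m+1)).filter fun n => 2 ^ n < m)
      ((Finset.range (m+1)).filter fun n => 2 ^ n = m) := by
    rw [Finset.disjoint_left]
    intro n h1 h2
    simp only [Finset.mem_filter] at h1 h2
    omega
  have hcard2 : ((Finset.range (m+1)).filter fun n => 2 ^ n = m).card
      = if ∃ n : ℕ, m = 2 ^ n then 1 else 0 := by
    split_ifs with h
    · obtain ⟨k, rfl⟩ := h
      have : ((Finset.range (2^k+1)).filter fun n => 2 ^ n = 2 ^ k) = {k} := by
        ext n
        simp only [Finset.mem_filter, Finset.mem_range, Finset.mem_singleton]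
        constructor
        · rintro ⟨_, h2⟩
          exact Nat.pow_right_injective (le_refl 2) h2
        · intro h
          subst h
          exact ⟨Nat.lt_succ_of_lt (Nat.lt_two_pow_self (n := n)), rfl⟩
      rw [this, Finset.card_singleton]
    · rw [Finset.card_eq_zero, Finset.filter_eq_empty_iff]
      intro n _
      exact fun hn => h ⟨n, hn.symm⟩
  rw [h1, h2, hsplit, Finset.card_union_of_disjoint hdisj, hcard2]
  push_cast
  ring

lemma two_pow_ne {p : ℕ} (hp : p.Prime) (m j k : ℕ) (hj : j < m) (hjk : j < k) :
    ((p : ZMod (p ^ m)) ^ j ≠ (p : ZMod (p ^ m)) ^ k) := by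
  intro h
  have hcast : ((p ^ j : ℕ) : ZMod (p ^ m)) = ((p ^ k : ℕ) : ZMod (p ^ m)) := by
    push_cast; exact h
  have hmod : (p ^ j : ℕ) ≡ p ^ k [MOD p ^ m] := (ZMod.natCast_eq_natCast_iff _ _ _).mp hcast
  have hle : p ^ j ≤ p ^ k := Nat.pow_le_pow_right hp.pos hjk.le
  have hdvd : p ^ m ∣ p ^ k - p ^ j := (Nat.modEq_iff_dvd' hle).mp hmod
  have hfac : p ^ k - p ^ j = p ^ j * (p ^ (k - j) - 1) := by
    have hkj : j + (k - j) = k := by omega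
    rw [Nat.mul_sub, mul_one, ← pow_add, hkj]
  rw [hfac] at hdvd
  have hcop : Nat.Coprime (p ^ m) (p ^ (k - j) - 1) := by
    apply Nat.Coprime.pow_left
    rw [hp.coprime_iff_not_dvd]
    intro h
    have h1 : p ∣ p ^ (k - j) := dvd_pow_self p (by omega)
    have h2 : p ∣ p ^ (k - j) - (p ^ (k - j) - 1) := Nat.dvd_sub h1 h
    have hq : 1 ≤ p ^ (k - j) := Nat.one_le_pow _ _ hp.pos
    rw [Nat.sub_sub_self hq] at h2
    have := Nat.le_of_dvd one_pos h2
    have := hp.two_le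
    omega
  have : p ^ m ∣ p ^ j := hcop.dvd_of_dvd_mul_right hdvd
  have := Nat.le_of_dvd (pow_pos hp.pos j) this
  have := (Nat.pow_le_pow_iff_right hp.one_lt).mp this
  omega

lemma two_pow_ne_zero {p : ℕ} (hp : p.Prime) (m j : ℕ) (hj : j < m) :
    ((p : ZMod (p ^ m)) ^ j ≠ 0) := by
  intro h
  have hcast : ((p ^ j : ℕ) : ZMod (p ^ m)) = 0 := by push_cast; exact h
  have : p ^ m ∣ p ^ j := (ZMod.natCast_eq_zero_iff _ _).mp hcast
  have := Nat.le_of_dvd (pow_pos hp.pos j) this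
  have := (Nat.pow_le_pow_iff_right hp.one_lt).mp this
  omega

lemma pow_eq_zero_of_ge {p : ℕ} (hp : p.Prime) (m k : ℕ) (hk : m ≤ k) :
    ((p : ZMod (p ^ m)) ^ k = 0) := by
  have : ((p ^ k : ℕ) : ZMod (p ^ m)) = 0 := by
    rw [ZMod.natCast_eq_zero_iff]
    exact pow_dvd_pow p hk
  push_cast at this
  exact this

lemma ncard_image (p : ℕ) [Fact p.Prime] (m : ℕ) :
    ((⇑(PadicInt.toZModPow (p := p) m)) ''
        {x : ℤ_[p] | ∃ n : ℕ, x = (p : ℤ_[p]) ^ (2 ^ n)}).ncard = cfun m + 1 := by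
  have hp := (Fact.out : p.Prime)
  have hset : {x : ℤ_[p] | ∃ n : ℕ, x = (p : ℤ_[p]) ^ (2 ^ n)}
      = Set.range (fun n : ℕ => (p : ℤ_[p]) ^ (2 ^ n)) := by
    ext x; simp [Set.range, eq_comm]
  rw [hset, ← Set.range_comp]
  have hcomp : (⇑(PadicInt.toZModPow (p := p) m) ∘ fun n : ℕ => (p : ℤ_[p]) ^ (2 ^ n))
      = fun n : ℕ => (p : ZMod (p ^ m)) ^ (2 ^ n) := by
    funext n
    simp [Function.comp, map_pow]
  rw [hcomp]
  have himg : Set.range (fun n : ℕ => (p : ZMod (p ^ m)) ^ (2 ^ n))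
      = insert (0 : ZMod (p ^ m)) ((fun n : ℕ => (p : ZMod (p ^ m)) ^ (2 ^ n)) ''
          {n : ℕ | 2 ^ n < m}) := by
    ext x
    simp only [Set.mem_range, Set.mem_insert_iff, Set.mem_image, Set.mem_setOf_eq]
    constructor
    · rintro ⟨n, rfl⟩
      by_cases h : 2 ^ n < m
      · exact Or.inr ⟨n, h, rfl⟩
      · exact Or.inl (pow_eq_zero_of_ge hp m _ (not_lt.mp h))
    · rintro (rfl | ⟨n, _, rfl⟩)
      · exact ⟨m, pow_eq_zero_of_ge hp m _ (Nat.le_of_lt (Nat.lt_two_pow_self (n := m)))⟩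
      · exact ⟨n, rfl⟩
  rw [himg]
  have hfin : ({n : ℕ | 2 ^ n < m}).Finite := by
    apply Set.Finite.subset (Set.finite_Iio m)
    intro n hn
    exact lt_of_two_pow_lt hn
  have hinj : Set.InjOn (fun n : ℕ => (p : ZMod (p ^ m)) ^ (2 ^ n)) {n : ℕ | 2 ^ n < m} := by
    intro a ha b hb hab
    rcases lt_trichotomy a b with h | h | h
    · exact absurd hab (two_pow_ne hp m _ _ ha (Nat.pow_lt_pow_right one_lt_two h))
    · exact h
    · exact absurd hab.symm (two_pow_ne hp m _ _ hb (Nat.pow_lt_pow_right one_lt_two h))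
  have hnotmem : (0 : ZMod (p ^ m)) ∉
      ((fun n : ℕ => (p : ZMod (p ^ m)) ^ (2 ^ n)) '' {n : ℕ | 2 ^ n < m}) := by
    rintro ⟨n, hn, h0⟩
    exact two_pow_ne_zero hp m _ hn h0
  rw [Set.ncard_insert_of_notMem hnotmem (hfin.image _), Set.ncard_image_of_injOn hinj]
  have : {n : ℕ | 2 ^ n < m} = ↑((Finset.range m).filter fun n => 2 ^ n < m) := by
    ext n
    simp only [Set.mem_setOf_eq, Finset.coe_filter, Finset.mem_range]
    exact ⟨fun h => ⟨lt_of_two_pow_lt h, h⟩, fun h => h.2⟩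
  rw [this, Set.ncard_coe_finset]
  rfl

/-- The Poincaré series of A = {p^(2^n) : n ∈ ℕ} ⊆ ℤ_p, where
N_m = |{x mod p^m : x ∈ A}| and P(T) = ∑ N_m T^m, satisfies
(1 - T)·P(T) = 1 + ∑_{n=0}^∞ T^(2^n+1). -/
theorem stmt3 (p : ℕ) [Fact p.Prime] :
    (1 - PowerSeries.X) *
      PowerSeries.mk (fun m =>
        (((⇑(PadicInt.toZModPow (p := p) m)) ''
            {x : ℤ_[p] | ∃ n : ℕ, x = (p : ℤ_[p]) ^ (2 ^ n)}).ncard : ℤ)) =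
      Fseries := by
  ext m
  rw [sub_mul, one_mul, map_sub]
  cases m with
  | zero =>
    rw [PowerSeries.coeff_zero_X_mul, PowerSeries.coeff_mk, ncard_image p 0]
    simp [Fseries, cfun]
  | succ m =>
    rw [PowerSeries.coeff_succ_X_mul, PowerSeries.coeff_mk, PowerSeries.coeff_mk,
      ncard_image p (m+1), ncard_image p m, Fseries, PowerSeries.coeff_mk]
    push_cast
    rw [cfun_succ m]
    ring
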